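/- Let τ be any of the four generalized patterns 12, 1-2, 21, 2-1. For every k≥2, the generating function for permutations avoiding 1-3-2 and τ-3-4-⋯-k (the pattern of length k obtained by appending the letters 3,4,…,k, each separated by dashes) satisfies F_{τ-3-4-⋯-k}(x) = R_k(x) = V_{k−1}(x)/V_k(x); equivalently, V_k(x)·F_{τ-3-4-⋯-k}(x) = V_{k−1}(x) as formal power series. -/

import Mathlib

open Finset PowerSeries

/-- A generalized pattern in the sense of Babson–Steingrímsson: a permutation of
`Fin k` together with a set of (0-indexed) positions `j` such that the letters in
positions `j` and `j+1` must be adjacent in any occurrence. -/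
structure GenPattern (k : ℕ) where
  perm : Equiv.Perm (Fin k)
  adj : Set ℕ

/-- `f` is an occurrence of the generalized pattern `p` in the permutation `π`. -/
def GenPattern.Occ {k n : ℕ} (p : GenPattern k) (π : Equiv.Perm (Fin n))
    (f : Fin k → Fin n) : Prop :=
  StrictMono f ∧
  (∀ a b : Fin k, π (f a) < π (f b) ↔ p.perm a < p.perm b) ∧
  (∀ j : ℕ, j ∈ p.adj → ∀ hj : j + 1 < k,
    ((f ⟨j + 1, hj⟩ : ℕ) = (f ⟨j, by omega⟩ : ℕ) + 1))

/-- `π` avoids the generalized pattern `p`. -/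
def GenPattern.Avoids {k n : ℕ} (p : GenPattern k) (π : Equiv.Perm (Fin n)) : Prop :=
  ¬ ∃ f, p.Occ π f

/-- `π` contains exactly one occurrence of the generalized pattern `p`. -/
def GenPattern.ContainsOnce {k n : ℕ} (p : GenPattern k) (π : Equiv.Perm (Fin n)) : Prop :=
  ∃! f, p.Occ π f

/-- The classical pattern 1-3-2 (as a generalized pattern with no adjacencies). -/
def pat132 : GenPattern 3 := ⟨Equiv.swap 1 2, ∅⟩

/-- `F_τ(x)`: generating function for permutations avoiding 1-3-2 and `p`. -/
noncomputable def Fgen {k : ℕ} (p : GenPattern k) : PowerSeries ℚ :=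
  PowerSeries.mk fun n =>
    (Nat.card {π : Equiv.Perm (Fin n) // pat132.Avoids π ∧ p.Avoids π} : ℚ)

/-- `G_τ(x)`: generating function for permutations avoiding 1-3-2 and containing
`p` exactly once. -/
noncomputable def Ggen {k : ℕ} (p : GenPattern k) : PowerSeries ℚ :=
  PowerSeries.mk fun n =>
    (Nat.card {π : Equiv.Perm (Fin n) // pat132.Avoids π ∧ p.ContainsOnce π} : ℚ)

/-- `H_τ(x)`: generating function for permutations containing 1-3-2 exactly once
and avoiding `p`. -/
noncomputable def Hgen {k : ℕ} (p : GenPattern k) : PowerSeries ℚ :=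
  PowerSeries.mk fun n =>
    (Nat.card {π : Equiv.Perm (Fin n) // pat132.ContainsOnce π ∧ p.Avoids π} : ℚ)

/-- `Φ_τ(x)`: generating function for permutations containing both 1-3-2 and `p`
exactly once. -/
noncomputable def Phigen {k : ℕ} (p : GenPattern k) : PowerSeries ℚ :=
  PowerSeries.mk fun n =>
    (Nat.card {π : Equiv.Perm (Fin n) // pat132.ContainsOnce π ∧ p.ContainsOnce π} : ℚ)

/-- `G_β^φ(x)`: generating function for permutations avoiding 1-3-2 and `φ` and
containing `β` exactly once. -/
noncomputable def Ggen2 {k l : ℕ} (β : GenPattern k) (φ : GenPattern l) : PowerSeries ℚ :=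
  PowerSeries.mk fun n =>
    (Nat.card {π : Equiv.Perm (Fin n) //
      pat132.Avoids π ∧ φ.Avoids π ∧ β.ContainsOnce π} : ℚ)

/-- `V k = x^(k/2) · U_k(1/(2√x))`, the rescaled Chebyshev polynomials of the
second kind: `V 0 = V 1 = 1`, `V (k+2) = V (k+1) - x · V k`. -/
noncomputable def V : ℕ → PowerSeries ℚ
  | 0 => 1
  | 1 => 1
  | (k + 2) => V (k + 1) - PowerSeries.X * V k

/-- Position `i` is a right-to-left maximum of `φ`. -/
def IsRLMax {k : ℕ} (φ : Equiv.Perm (Fin k)) (i : Fin k) : Prop :=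
  ∀ j : Fin k, i < j → φ j < φ i

/-- `ρ` is the order-isomorphic reduction of the contiguous segment of `τ` of
length `t` starting at position `s` (adjacency requirements restricted to the
segment and shifted accordingly). -/
def IsReduction {k t : ℕ} (τ : GenPattern k) (s : ℕ) (ρ : GenPattern t) : Prop :=
  s + t ≤ k ∧
  (∀ (a b : Fin t) (ha : s + (a : ℕ) < k) (hb : s + (b : ℕ) < k),
    (ρ.perm a < ρ.perm b ↔ τ.perm ⟨s + a, ha⟩ < τ.perm ⟨s + b, hb⟩)) ∧
  (∀ j : ℕ, j ∈ ρ.adj ↔ (s + j) ∈ τ.adj ∧ j + 1 < t)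

-- ===== auxiliary development =====
section Aux

def patPerm (k : ℕ) (sw : Bool) : Equiv.Perm (Fin (k+2)) :=
  if sw then Equiv.swap ⟨0, by omega⟩ ⟨1, by omega⟩ else 1

def patAdj (adj : Bool) : Set ℕ := if adj then {0} else ∅

def genPat (k : ℕ) (sw adj : Bool) : GenPattern (k+2) := ⟨patPerm k sw, patAdj adj⟩

def patVal (sw : Bool) (i : ℕ) : ℕ :=
  if sw then (if i = 0 then 1 else if i = 1 then 0 else i) else i

lemma patPerm_lt (k : ℕ) (sw : Bool) (a b : Fin (k+2)) :
    patPerm k sw a < patPerm k sw b ↔ patVal sw a < patVal sw b := by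
  cases sw with
  | false =>
    have key : ∀ c : Fin (k+2), ((patPerm k false c : Fin (k+2)) : ℕ) = patVal false c := by
      intro c; rfl
    rw [Fin.lt_def, key, key]
  | true =>
    have key : ∀ c : Fin (k+2), ((patPerm k true c : Fin (k+2)) : ℕ) = patVal true c := by
      intro c
      simp only [patPerm, if_true, Equiv.swap_apply_def, patVal]
      by_cases h0 : c = (⟨0, by omega⟩ : Fin (k+2))
      · subst h0; simp
      · by_cases h1 : c = (⟨1, by omega⟩ : Fin (k+2))
        · subst h1; simp [Fin.ext_iff]
        · rw [if_neg h0, if_neg h1]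
          rw [Fin.ext_iff] at h0 h1
          simp only [if_neg h0, if_neg h1]
    rw [Fin.lt_def, key, key]

lemma patVal_lt_of {sw : Bool} {i j : ℕ} (h2 : 2 ≤ j) (h : i < j) :
    patVal sw i < patVal sw j := by
  unfold patVal; split_ifs <;> omega

lemma patVal_le_one {sw : Bool} {i : ℕ} (h : i ≤ 1) : patVal sw i ≤ 1 := by
  unfold patVal; split_ifs <;> omega

lemma genPat_adj_sub {k : ℕ} {sw adj : Bool} {j : ℕ} (h : j ∈ (genPat k sw adj).adj) :
    j = 0 := by
  simp only [genPat, patAdj] at h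
  split_ifs at h <;> simp_all

lemma mem_genPat_adj {k : ℕ} {sw adj : Bool} {j : ℕ} (h : j ∈ (genPat k sw adj).adj)
    (k' : ℕ) : j ∈ (genPat k' sw adj).adj := by
  simp only [genPat, patAdj] at *
  split_ifs at h ⊢ <;> simp_all

-- ===== the join permutation =====
variable {a b n : ℕ}

def joinFun (h : a + 1 + b = n) (α : Equiv.Perm (Fin a)) (β : Equiv.Perm (Fin b)) :
    Fin n → Fin n := fun i =>
  if hi : (i : ℕ) < a then ⟨b + α ⟨i, hi⟩, by omega⟩
  else if hi2 : (i : ℕ) = a then ⟨n - 1, by omega⟩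
  else ⟨β ⟨(i : ℕ) - (a+1), by omega⟩, by omega⟩

def joinInv (h : a + 1 + b = n) (α : Equiv.Perm (Fin a)) (β : Equiv.Perm (Fin b)) :
    Fin n → Fin n := fun v =>
  if hv : (v : ℕ) < b then ⟨a + 1 + β.symm ⟨v, hv⟩, by omega⟩
  else if hv2 : (v : ℕ) = n - 1 then ⟨a, by omega⟩
  else ⟨α.symm ⟨(v : ℕ) - b, by omega⟩, by omega⟩

def join (h : a + 1 + b = n) (α : Equiv.Perm (Fin a)) (β : Equiv.Perm (Fin b)) :
    Equiv.Perm (Fin n) where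
  toFun := joinFun h α β
  invFun := joinInv h α β
  left_inv := by
    intro i
    by_cases hi : (i : ℕ) < a
    · show joinInv h α β (joinFun h α β i) = i
      rw [joinFun, dif_pos hi]
      rw [joinInv]
      have h1 : ¬ ((⟨b + (α ⟨i, hi⟩ : ℕ), by omega⟩ : Fin n) : ℕ) < b := by
        simp <;> omega
      have h2 : ¬ ((⟨b + (α ⟨i, hi⟩ : ℕ), by omega⟩ : Fin n) : ℕ) = n - 1 := by
        have := (α ⟨i, hi⟩).isLt; simp <;> omega
      rw [dif_neg h1, dif_neg h2]
      have h3 : (⟨((⟨b + (α ⟨i, hi⟩ : ℕ), by omega⟩ : Fin n) : ℕ) - b, by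
          have := (α ⟨i, hi⟩).isLt; simp <;> omega⟩ : Fin a) = α ⟨i, hi⟩ := by
        apply Fin.ext; simp
      rw [Fin.ext_iff]
      simp [h3]
    · by_cases hi2 : (i : ℕ) = a
      · show joinInv h α β (joinFun h α β i) = i
        rw [joinFun, dif_neg hi, dif_pos hi2]
        rw [joinInv]
        have h1 : ¬ ((⟨n - 1, by omega⟩ : Fin n) : ℕ) < b := by simp <;> omega
        have h2 : ((⟨n - 1, by omega⟩ : Fin n) : ℕ) = n - 1 := rfl
        rw [dif_neg h1, dif_pos h2, Fin.ext_iff]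
        simp [hi2.symm]
      · show joinInv h α β (joinFun h α β i) = i
        rw [joinFun, dif_neg hi, dif_neg hi2]
        rw [joinInv]
        have h1 : ((⟨(β ⟨(i : ℕ) - (a+1), by omega⟩ : ℕ), by omega⟩ : Fin n) : ℕ) < b := by
          simp
        rw [dif_pos h1]
        have h3 : (⟨((⟨(β ⟨(i : ℕ) - (a+1), by omega⟩ : ℕ), by omega⟩ : Fin n) : ℕ), h1⟩ :
            Fin b) = β ⟨(i : ℕ) - (a+1), by omega⟩ := by apply Fin.ext; simp
        rw [Fin.ext_iff]
        simp [h3] <;> omega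
  right_inv := by
    intro v
    by_cases hv : (v : ℕ) < b
    · show joinFun h α β (joinInv h α β v) = v
      rw [joinInv, dif_pos hv]
      rw [joinFun]
      have h1 : ¬ ((⟨a + 1 + (β.symm ⟨v, hv⟩ : ℕ), by omega⟩ : Fin n) : ℕ) < a := by
        simp <;> omega
      have h2 : ¬ ((⟨a + 1 + (β.symm ⟨v, hv⟩ : ℕ), by omega⟩ : Fin n) : ℕ) = a := by
        simp <;> omega
      rw [dif_neg h1, dif_neg h2]
      have h3 : (⟨((⟨a + 1 + (β.symm ⟨v, hv⟩ : ℕ), by omega⟩ : Fin n) : ℕ) - (a+1), by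
          have := (β.symm ⟨v, hv⟩).isLt; simp <;> omega⟩ : Fin b) = β.symm ⟨v, hv⟩ := by
        apply Fin.ext; simp
      rw [Fin.ext_iff]
      simp [h3]
    · by_cases hv2 : (v : ℕ) = n - 1
      · show joinFun h α β (joinInv h α β v) = v
        rw [joinInv, dif_neg hv, dif_pos hv2]
        rw [joinFun]
        have h1 : ¬ ((⟨a, by omega⟩ : Fin n) : ℕ) < a := by simp
        have h2 : ((⟨a, by omega⟩ : Fin n) : ℕ) = a := rfl
        rw [dif_neg h1, dif_pos h2, Fin.ext_iff]
        simp [hv2.symm]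
      · show joinFun h α β (joinInv h α β v) = v
        rw [joinInv, dif_neg hv, dif_neg hv2]
        rw [joinFun]
        have h1 : ((⟨(α.symm ⟨(v : ℕ) - b, by omega⟩ : ℕ), by omega⟩ : Fin n) : ℕ) < a := by
          simp
        rw [dif_pos h1]
        have h3 : (⟨((⟨(α.symm ⟨(v : ℕ) - b, by omega⟩ : ℕ), by omega⟩ : Fin n) : ℕ), h1⟩ :
            Fin a) = α.symm ⟨(v : ℕ) - b, by omega⟩ := by apply Fin.ext; simp
        rw [Fin.ext_iff]
        simp [h3] <;> omega

lemma join_apply_lt (h : a + 1 + b = n) (α : Equiv.Perm (Fin a)) (β : Equiv.Perm (Fin b))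
    (i : Fin n) (hi : (i : ℕ) < a) : ((join h α β) i : ℕ) = b + α ⟨i, hi⟩ := by
  simp [join, joinFun, hi]

lemma join_apply_eq (h : a + 1 + b = n) (α : Equiv.Perm (Fin a)) (β : Equiv.Perm (Fin b))
    (i : Fin n) (hi : (i : ℕ) = a) : ((join h α β) i : ℕ) = n - 1 := by
  have : ¬ ((i:ℕ) < a) := by omega
  simp [join, joinFun, this, hi]

lemma join_apply_gt (h : a + 1 + b = n) (α : Equiv.Perm (Fin a)) (β : Equiv.Perm (Fin b))
    (i : Fin n) (hi : a < (i : ℕ)) :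
    ((join h α β) i : ℕ) = β ⟨(i : ℕ) - (a+1), by omega⟩ := by
  have h1 : ¬ ((i:ℕ) < a) := by omega
  have h2 : ¬ ((i:ℕ) = a) := by omega
  simp [join, joinFun, h1, h2]

lemma join_left_ge (h : a + 1 + b = n) (α : Equiv.Perm (Fin a)) (β : Equiv.Perm (Fin b))
    (i : Fin n) (hi : (i : ℕ) ≤ a) : b ≤ ((join h α β) i : ℕ) := by
  rcases lt_or_eq_of_le hi with hi' | hi'
  · rw [join_apply_lt h α β i hi']; omega
  · rw [join_apply_eq h α β i hi']; omega

lemma join_right_lt (h : a + 1 + b = n) (α : Equiv.Perm (Fin a)) (β : Equiv.Perm (Fin b))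
    (i : Fin n) (hi : a < (i : ℕ)) : ((join h α β) i : ℕ) < b := by
  rw [join_apply_gt h α β i hi]; exact Fin.isLt _

lemma join_cross (h : a + 1 + b = n) (α : Equiv.Perm (Fin a)) (β : Equiv.Perm (Fin b))
    (u v : Fin n) (hu : (u : ℕ) ≤ a) (hv : a < (v : ℕ)) :
    (join h α β) v < (join h α β) u := by
  have := join_left_ge h α β u hu
  have := join_right_lt h α β v hv
  exact Fin.lt_def.mpr (by omega)

end Aux

-- chunk 2: occurrence transfer (appended to a.lean for testing)
section Aux2
variable {a b n : ℕ}

def p132val : Fin 3 → ℕ := ![0, 2, 1]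

lemma pat132_lt : ∀ x y : Fin 3, (pat132.perm x < pat132.perm y ↔ p132val x < p132val y) := by
  decide

-- generic embedding of an occurrence in α into the join
lemma occ_left_cast {K : ℕ} (h : a + 1 + b = n) (α : Equiv.Perm (Fin a))
    (β : Equiv.Perm (Fin b)) (p : GenPattern K) (g : Fin K → Fin a) (hg : p.Occ α g) :
    p.Occ (join h α β) (fun i => (⟨g i, by omega⟩ : Fin n)) := by
  obtain ⟨hm, hiso, hadj⟩ := hg
  refine ⟨?_, ?_, ?_⟩
  · intro x y hxy
    exact Fin.lt_def.mpr (by simpa using Fin.lt_def.mp (hm hxy))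
  · intro x y
    rw [← hiso x y]
    have e : ∀ z : Fin K, ((join h α β) ⟨g z, by omega⟩ : ℕ) = b + α (g z) := by
      intro z
      rw [join_apply_lt h α β _ (by simpa using (g z).isLt)]
    rw [Fin.lt_def, Fin.lt_def, e x, e y]
    omega
  · intro j hj hjk
    have := hadj j hj hjk
    simpa using this

lemma occ_right_cast {K : ℕ} (h : a + 1 + b = n) (α : Equiv.Perm (Fin a))
    (β : Equiv.Perm (Fin b)) (p : GenPattern K) (g : Fin K → Fin b) (hg : p.Occ β g) :
    p.Occ (join h α β) (fun i => (⟨a + 1 + g i, by omega⟩ : Fin n)) := by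
  obtain ⟨hm, hiso, hadj⟩ := hg
  refine ⟨?_, ?_, ?_⟩
  · intro x y hxy
    exact Fin.lt_def.mpr (by simpa using Fin.lt_def.mp (hm hxy))
  · intro x y
    rw [← hiso x y]
    have e : ∀ z : Fin K, ((join h α β) ⟨a + 1 + g z, by omega⟩ : ℕ) = β (g z) := by
      intro z
      rw [join_apply_gt h α β _ (by simp; omega)]
      congr 1
      apply Fin.ext
      simp
    rw [Fin.lt_def, Fin.lt_def, e x, e y]
  · intro j hj hjk
    have := hadj j hj hjk
    simpa [Nat.add_assoc] using this

lemma patVal_two {sw : Bool} : patVal sw 2 = 2 := by simp [patVal]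

-- extend an occurrence of genPat m in α by the maximum: occurrence of genPat (m+1) in join
lemma occ_left_top {m : ℕ} {sw adj : Bool} (h : a + 1 + b = n) (α : Equiv.Perm (Fin a))
    (β : Equiv.Perm (Fin b)) (g : Fin (m+2) → Fin a) (hg : (genPat m sw adj).Occ α g) :
    ∃ F, (genPat (m+1) sw adj).Occ (join h α β) F := by
  obtain ⟨hm, hiso, hadj⟩ := hg
  refine ⟨fun i => if hi : (i : ℕ) < m + 2 then (⟨g ⟨i, hi⟩, by omega⟩ : Fin n)
    else ⟨a, by omega⟩, ?_, ?_, ?_⟩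
  · intro x y hxy
    dsimp only
    by_cases hy : (y : ℕ) < m + 2
    · have hx : (x : ℕ) < m + 2 := lt_trans (Fin.lt_def.mp hxy) hy
      rw [dif_pos hx, dif_pos hy]
      exact Fin.lt_def.mpr (by simpa using Fin.lt_def.mp (hm (show (⟨x, hx⟩ : Fin (m+2)) < ⟨y, hy⟩ from hxy)))
    · have hx : (x : ℕ) < m + 2 := by
        have := y.isLt; have := Fin.lt_def.mp hxy; omega
      rw [dif_pos hx, dif_neg hy]
      exact Fin.lt_def.mpr (by simpa using (g ⟨x, hx⟩).isLt)
  · intro x y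
    dsimp only
    have val : ∀ z : Fin (m+3), ((join h α β) (if hz : (z : ℕ) < m + 2
        then (⟨g ⟨z, hz⟩, by omega⟩ : Fin n) else ⟨a, by omega⟩) : ℕ)
        = if hz : (z : ℕ) < m + 2 then b + α (g ⟨z, hz⟩) else n - 1 := by
      intro z
      by_cases hz : (z : ℕ) < m + 2
      · rw [dif_pos hz, dif_pos hz, join_apply_lt h α β _ (by simpa using (g ⟨z, hz⟩).isLt)]
      · rw [dif_neg hz, dif_neg hz, join_apply_eq h α β _ rfl]
    rw [show (genPat (m+1) sw adj).perm = patPerm (m+1) sw from rfl, patPerm_lt,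
      Fin.lt_def, val x, val y]
    by_cases hx : (x : ℕ) < m + 2 <;> by_cases hy : (y : ℕ) < m + 2
    · rw [dif_pos hx, dif_pos hy]
      have := hiso ⟨x, hx⟩ ⟨y, hy⟩
      rw [show (genPat m sw adj).perm = patPerm m sw from rfl, patPerm_lt] at this
      rw [Fin.lt_def] at this
      simp only [← this]
      omega
    · rw [dif_pos hx, dif_neg hy]
      have h1 : b + (α (g ⟨x, hx⟩) : ℕ) < n - 1 := by
        have := (α (g ⟨x, hx⟩)).isLt; omega
      have h2 : patVal sw x < patVal sw y := by
        apply patVal_lt_of (by omega) (by have := x.isLt; have := y.isLt; omega)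
      simp [h1, h2]
    · rw [dif_neg hx, dif_pos hy]
      have h1 : ¬ (n - 1 < b + (α (g ⟨y, hy⟩) : ℕ)) := by
        have := (α (g ⟨y, hy⟩)).isLt; omega
      have h2 : ¬ (patVal sw x < patVal sw y) := by
        have : patVal sw y < patVal sw x :=
          patVal_lt_of (by omega) (by have := y.isLt; have := x.isLt; omega)
        omega
      simp [h1, h2]
    · rw [dif_neg hx, dif_neg hy]
      have : (x : ℕ) = (y : ℕ) := by have := x.isLt; have := y.isLt; omega
      simp [this]
  · intro j hj hjk
    have hj0 : j = 0 := genPat_adj_sub hj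
    subst hj0
    dsimp only
    have h1 : (1 : ℕ) < m + 2 := by omega
    have h0 : (0 : ℕ) < m + 2 := by omega
    rw [dif_pos h1, dif_pos h0]
    have := hadj 0 (mem_genPat_adj hj m) (by omega)
    simpa using this

end Aux2

section Aux3
variable {a b n : ℕ}

lemma occ_join_132 (h : a + 1 + b = n) (α : Equiv.Perm (Fin a)) (β : Equiv.Perm (Fin b))
    {f : Fin 3 → Fin n} (hocc : pat132.Occ (join h α β) f) :
    (∃ g, pat132.Occ α g) ∨ (∃ g, pat132.Occ β g) := by
  obtain ⟨hm, hiso, -⟩ := hocc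
  have hval : ∀ x y : Fin 3, (join h α β) (f x) < (join h α β) (f y) ↔ p132val x < p132val y := by
    intro x y; rw [hiso x y]; exact pat132_lt x y
  by_cases h0 : a < (f 0 : ℕ)
  · -- all in β part
    right
    have hall : ∀ i : Fin 3, a < (f i : ℕ) := by
      intro i
      have : f 0 ≤ f i := hm.le_iff_le.mpr (Fin.zero_le i)
      have := Fin.le_def.mp this; omega
    refine ⟨fun i => ⟨(f i : ℕ) - (a + 1), by have := (f i).isLt; have := hall i; omega⟩,
      ?_, ?_, ?_⟩
    · intro x y hxy
      have := Fin.lt_def.mp (hm hxy)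
      have := hall x; have := hall y
      exact Fin.lt_def.mpr (by simp; omega)
    · intro x y
      dsimp only
      rw [pat132_lt x y, ← hval x y]
      have e : ∀ z : Fin 3, (β ⟨(f z : ℕ) - (a + 1), by have := (f z).isLt; have := hall z; omega⟩ : ℕ)
          = ((join h α β) (f z) : ℕ) := by
        intro z
        rw [join_apply_gt h α β _ (hall z)]
      rw [Fin.lt_def, Fin.lt_def]
      rw [e x, e y]
    · intro j hj; exact absurd hj (by simp [pat132])
  · push_neg at h0
    have h1 : (f 1 : ℕ) ≤ a := by
      by_contra hc
      push_neg at hc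
      have c1 := join_cross h α β (f 0) (f 1) h0 hc
      have c2 := (hval 0 1).mpr (by simp [p132val])
      exact absurd c1 (lt_asymm c2)
    have h2 : (f 2 : ℕ) ≤ a := by
      by_contra hc
      push_neg at hc
      have c1 := join_cross h α β (f 0) (f 2) h0 hc
      have c2 := (hval 0 2).mpr (by simp [p132val])
      exact absurd c1 (lt_asymm c2)
    have h2' : (f 2 : ℕ) < a := by
      rcases lt_or_eq_of_le h2 with hlt | heq
      · exact hlt
      · exfalso
        have hf1 : (f 1 : ℕ) < a := by
          have := Fin.lt_def.mp (hm (show (1 : Fin 3) < 2 by decide)); omega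
        have e2 : ((join h α β) (f 2) : ℕ) = n - 1 := join_apply_eq h α β _ heq
        have e1 : ((join h α β) (f 1) : ℕ) = b + α ⟨f 1, hf1⟩ := join_apply_lt h α β _ hf1
        have c2 := (hval 2 1).mpr (by simp [p132val])
        have := Fin.lt_def.mp c2
        have := (α (⟨f 1, hf1⟩ : Fin a)).isLt
        omega
    left
    have hlt : ∀ i : Fin 3, (f i : ℕ) < a := by
      intro i
      have : f i ≤ f 2 := hm.le_iff_le.mpr (by omega)
      have := Fin.le_def.mp this; omega
    refine ⟨fun i => ⟨f i, hlt i⟩, ?_, ?_, ?_⟩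
    · intro x y hxy
      exact Fin.lt_def.mpr (by simpa using Fin.lt_def.mp (hm hxy))
    · intro x y
      dsimp only
      rw [pat132_lt x y, ← hval x y]
      have e : ∀ z : Fin 3, ((join h α β) (f z) : ℕ) = b + α ⟨f z, hlt z⟩ :=
        fun z => join_apply_lt h α β _ (hlt z)
      rw [Fin.lt_def, Fin.lt_def, e x, e y]
      omega
    · intro j hj; exact absurd hj (by simp [pat132])

lemma patVal_zero_lt_two {sw : Bool} : patVal sw 0 < 2 := by simp [patVal]; split_ifs <;> omega
lemma patVal_one_lt_two {sw : Bool} : patVal sw 1 < 2 := by simp [patVal]; split_ifs <;> omega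

lemma occ_join_gen {m : ℕ} {sw adj : Bool} (h : a + 1 + b = n) (α : Equiv.Perm (Fin a))
    (β : Equiv.Perm (Fin b)) {f : Fin (m+3) → Fin n}
    (hocc : (genPat (m+1) sw adj).Occ (join h α β) f) :
    (∃ g, (genPat m sw adj).Occ α g) ∨ (∃ g, (genPat (m+1) sw adj).Occ β g) := by
  obtain ⟨hm, hiso, hadj⟩ := hocc
  have hval : ∀ x y : Fin (m+3),
      ((join h α β) (f x) < (join h α β) (f y) ↔ patVal sw x < patVal sw y) := by
    intro x y
    rw [hiso x y, show (genPat (m+1) sw adj).perm = patPerm (m+1) sw from rfl, patPerm_lt]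
  have hp0 : 0 < m + 3 := by omega
  have hp1 : 1 < m + 3 := by omega
  have hp2 : 2 < m + 3 := by omega
  have hpl : m + 2 < m + 3 := by omega
  by_cases h0 : a < (f ⟨0, hp0⟩ : ℕ)
  · -- all in β part
    right
    have hall : ∀ i : Fin (m+3), a < (f i : ℕ) := by
      intro i
      have : f ⟨0, hp0⟩ ≤ f i := hm.le_iff_le.mpr (by rw [Fin.le_def]; simp)
      have := Fin.le_def.mp this; omega
    refine ⟨fun i => ⟨(f i : ℕ) - (a + 1), by have := (f i).isLt; have := hall i; omega⟩,
      ?_, ?_, ?_⟩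
    · intro x y hxy
      have := Fin.lt_def.mp (hm hxy)
      have := hall x; have := hall y
      exact Fin.lt_def.mpr (by simp; omega)
    · intro x y
      dsimp only
      rw [show (genPat (m+1) sw adj).perm = patPerm (m+1) sw from rfl, patPerm_lt, ← hval x y]
      have e : ∀ z : Fin (m+3),
          (β ⟨(f z : ℕ) - (a + 1), by have := (f z).isLt; have := hall z; omega⟩ : ℕ)
          = ((join h α β) (f z) : ℕ) := by
        intro z
        rw [join_apply_gt h α β _ (hall z)]
      rw [Fin.lt_def, Fin.lt_def, e x, e y]
    · intro j hj hjk
      have := hadj j hj hjk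
      have hx := hall ⟨j + 1, hjk⟩
      have hy := hall ⟨j, by omega⟩
      dsimp only
      omega
  · push_neg at h0
    have h1 : (f ⟨1, hp1⟩ : ℕ) ≤ a := by
      by_contra hc
      push_neg at hc
      have hstep : f ⟨1, hp1⟩ < f ⟨2, hp2⟩ := hm (by rw [Fin.lt_def]; simp)
      have hc2 : a < (f ⟨2, hp2⟩ : ℕ) := by
        have := Fin.lt_def.mp hstep; omega
      have c1 := join_cross h α β (f ⟨0, hp0⟩) (f ⟨2, hp2⟩) h0 hc2
      have c2 := (hval ⟨0, hp0⟩ ⟨2, hp2⟩).mpr (by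
        show patVal sw 0 < patVal sw 2
        rw [patVal_two]; exact patVal_zero_lt_two)
      exact absurd c1 (lt_asymm c2)
    have hlast : (f ⟨m + 2, hpl⟩ : ℕ) ≤ a := by
      by_contra hc
      push_neg at hc
      have c1 := join_cross h α β (f ⟨1, hp1⟩) (f ⟨m + 2, hpl⟩) h1 hc
      have c2 := (hval ⟨1, hp1⟩ ⟨m + 2, hpl⟩).mpr (by
        show patVal sw 1 < patVal sw (m + 2)
        have e2 : patVal sw (m + 2) = m + 2 := by cases sw <;> simp [patVal]
        rw [e2]
        have := patVal_one_lt_two (sw := sw); omega)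
      exact absurd c1 (lt_asymm c2)
    have hle : ∀ i : Fin (m+3), (f i : ℕ) ≤ a := by
      intro i
      have : f i ≤ f ⟨m + 2, hpl⟩ := hm.le_iff_le.mpr (by
        rw [Fin.le_def]; simp; omega)
      have := Fin.le_def.mp this; omega
    have hlt : ∀ i : Fin (m+3), (i : ℕ) < m + 2 → (f i : ℕ) < a := by
      intro i hi
      rcases lt_or_eq_of_le (hle i) with hlt' | heq
      · exact hlt'
      · exfalso
        have e2 : ((join h α β) (f i) : ℕ) = n - 1 := join_apply_eq h α β _ heq
        have c2 := (hval i ⟨m + 2, hpl⟩).mpr (by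
          show patVal sw i < patVal sw (m + 2)
          exact patVal_lt_of (by omega) hi)
        have hjlt := Fin.lt_def.mp c2
        have := ((join h α β) (f ⟨m + 2, hpl⟩)).isLt
        omega
    left
    refine ⟨fun i => ⟨f ⟨i, by omega⟩, hlt ⟨i, by omega⟩ (by simpa using i.isLt)⟩, ?_, ?_, ?_⟩
    · intro x y hxy
      have : f ⟨x, by omega⟩ < f ⟨y, by omega⟩ := hm (by rw [Fin.lt_def]; exact hxy)
      exact Fin.lt_def.mpr (by simpa using Fin.lt_def.mp this)
    · intro x y
      dsimp only
      rw [show (genPat m sw adj).perm = patPerm m sw from rfl, patPerm_lt]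
      have key := hval ⟨x, by omega⟩ ⟨y, by omega⟩
      have e : ∀ (z : Fin (m+3)) (hz : (z : ℕ) < m + 2),
          ((join h α β) (f z) : ℕ) = b + α ⟨f z, hlt z hz⟩ := by
        intro z hz
        exact join_apply_lt h α β _ (hlt z hz)
      rw [Fin.lt_def] at key
      rw [e ⟨x, by omega⟩ (by simpa using x.isLt), e ⟨y, by omega⟩ (by simpa using y.isLt)] at key
      constructor
      · intro hh
        exact key.mp (by have := Fin.lt_def.mp hh; omega)
      · intro hh
        exact Fin.lt_def.mpr (by have := key.mpr hh; omega)
    · intro j hj hjk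
      have hj0 : j = 0 := genPat_adj_sub hj
      subst hj0
      dsimp only
      have := hadj 0 (mem_genPat_adj hj (m+1)) (by omega)
      simpa using this

end Aux3

section Aux4
variable {a b n : ℕ}

lemma avoids132_join (h : a + 1 + b = n) (α : Equiv.Perm (Fin a)) (β : Equiv.Perm (Fin b)) :
    pat132.Avoids (join h α β) ↔ pat132.Avoids α ∧ pat132.Avoids β := by
  constructor
  · intro hav
    constructor
    · rintro ⟨g, hg⟩; exact hav ⟨_, occ_left_cast h α β pat132 g hg⟩
    · rintro ⟨g, hg⟩; exact hav ⟨_, occ_right_cast h α β pat132 g hg⟩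
  · rintro ⟨ha, hb⟩ ⟨f, hf⟩
    rcases occ_join_132 h α β hf with ⟨g, hg⟩ | ⟨g, hg⟩
    · exact ha ⟨g, hg⟩
    · exact hb ⟨g, hg⟩

lemma avoids_gen_join {m : ℕ} {sw adj : Bool} (h : a + 1 + b = n)
    (α : Equiv.Perm (Fin a)) (β : Equiv.Perm (Fin b)) :
    (genPat (m+1) sw adj).Avoids (join h α β) ↔
      (genPat m sw adj).Avoids α ∧ (genPat (m+1) sw adj).Avoids β := by
  constructor
  · intro hav
    constructor
    · rintro ⟨g, hg⟩
      exact hav (occ_left_top h α β g hg)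
    · rintro ⟨g, hg⟩
      exact hav ⟨_, occ_right_cast h α β _ g hg⟩
  · rintro ⟨ha, hb⟩ ⟨f, hf⟩
    rcases occ_join_gen h α β hf with ⟨g, hg⟩ | ⟨g, hg⟩
    · exact ha ⟨g, hg⟩
    · exact hb ⟨g, hg⟩

lemma occ132_of (π : Equiv.Perm (Fin n)) (u v w : Fin n) (huv : u < v) (hvw : v < w)
    (h1 : π u < π v) (h2 : π w < π v) (h3 : π u < π w) : ∃ f, pat132.Occ π f := by
  refine ⟨![u, v, w], ?_, ?_, ?_⟩
  · intro x y hxy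
    fin_cases x <;> fin_cases y
    · exact absurd hxy (by decide)
    · exact huv
    · exact huv.trans hvw
    · exact absurd hxy (by decide)
    · exact absurd hxy (by decide)
    · exact hvw
    · exact absurd hxy (by decide)
    · exact absurd hxy (by decide)
    · exact absurd hxy (by decide)
  · intro x y
    rw [pat132_lt x y]
    fin_cases x <;> fin_cases y
    · exact iff_of_false (lt_irrefl _) (by decide)
    · exact iff_of_true h1 (by decide)
    · exact iff_of_true h3 (by decide)
    · exact iff_of_false (lt_asymm h1) (by decide)
    · exact iff_of_false (lt_irrefl _) (by decide)
    · exact iff_of_false (lt_asymm h2) (by decide)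
    · exact iff_of_false (lt_asymm h3) (by decide)
    · exact iff_of_true h2 (by decide)
    · exact iff_of_false (lt_irrefl _) (by decide)
  · intro j hj
    exact absurd hj (by simp [pat132])

-- every 132-avoiding permutation with its maximum at position `a` is a join
lemma exists_join (h : a + 1 + b = n) (π : Equiv.Perm (Fin n))
    (hav : pat132.Avoids π) (hpos : π ⟨a, by omega⟩ = ⟨n - 1, by omega⟩) :
    ∃ (α : Equiv.Perm (Fin a)) (β : Equiv.Perm (Fin b)), join h α β = π := by
  have hmax : ∀ i : Fin n, (i : ℕ) ≠ a → (π i : ℕ) < n - 1 := by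
    intro i hi
    have hne : π i ≠ ⟨n - 1, by omega⟩ := by
      rw [← hpos]
      intro hc
      exact hi (by simpa [Fin.ext_iff] using π.injective hc)
    have := (π i).isLt
    have hne' : (π i : ℕ) ≠ n - 1 := fun hc => hne (Fin.ext hc)
    omega
  have hC0 : ∀ i j : Fin n, (i : ℕ) < a → a < (j : ℕ) → π j < π i := by
    intro i j hi hj
    rcases lt_trichotomy (π j) (π i) with hlt | heq | hgt
    · exact hlt
    · exact absurd (π.injective heq.symm) (by intro hc; rw [Fin.ext_iff] at hc; omega)
    · exfalso
      apply hav
      refine occ132_of π i ⟨a, by omega⟩ j (by rw [Fin.lt_def]; exact hi)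
        (by rw [Fin.lt_def]; exact hj) ?_ ?_ hgt
      · rw [hpos]
        exact Fin.lt_def.mpr (hmax i (by omega))
      · rw [hpos]
        exact Fin.lt_def.mpr (hmax j (by omega))
  have hge : ∀ i : Fin n, (i : ℕ) < a → b ≤ (π i : ℕ) := by
    intro i hi
    have hsub : (Finset.Ioi (⟨a, by omega⟩ : Fin n)).image π ⊆ Finset.Iio (π i) := by
      intro v hv
      simp only [Finset.mem_image, Finset.mem_Ioi] at hv
      obtain ⟨j, hj, rfl⟩ := hv
      simp only [Finset.mem_Iio]
      exact hC0 i j hi (Fin.lt_def.mp hj)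
    have hcard := Finset.card_le_card hsub
    rw [Finset.card_image_of_injective _ π.injective, Fin.card_Ioi, Fin.card_Iio] at hcard
    simp only [] at hcard
    omega
  have hlt : ∀ j : Fin n, a < (j : ℕ) → (π j : ℕ) < b := by
    intro j hj
    have hsub : (Finset.Iic (⟨a, by omega⟩ : Fin n)).image π ⊆ Finset.Ioi (π j) := by
      intro v hv
      simp only [Finset.mem_image, Finset.mem_Iic] at hv
      obtain ⟨i, hi, rfl⟩ := hv
      simp only [Finset.mem_Ioi]
      rcases lt_or_eq_of_le (Fin.le_def.mp hi) with hlt' | heq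
      · exact hC0 i j (by simpa using hlt') hj
      · have : i = (⟨a, by omega⟩ : Fin n) := Fin.ext (by simpa using heq)
        rw [this, hpos]
        exact Fin.lt_def.mpr (hmax j (by omega))
    have hcard := Finset.card_le_card hsub
    rw [Finset.card_image_of_injective _ π.injective, Fin.card_Iic, Fin.card_Ioi] at hcard
    simp only [] at hcard
    omega
  -- construct α
  have hwa : ∀ i : Fin a, ((π ⟨i, by omega⟩ : Fin n) : ℕ) - b < a := by
    intro i
    have := hmax ⟨i, by omega⟩ (by simp; omega)
    have := hge ⟨i, by omega⟩ (by simpa using i.isLt)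
    omega
  have hinja : Function.Injective (fun i : Fin a => (⟨(π ⟨i, by omega⟩ : ℕ) - b, hwa i⟩ : Fin a)) := by
    intro x y hxy
    simp only [Fin.mk.injEq] at hxy
    have hx := hge ⟨x, by omega⟩ (by simpa using x.isLt)
    have hy := hge ⟨y, by omega⟩ (by simpa using y.isLt)
    have : π ⟨x, by omega⟩ = π ⟨y, by omega⟩ := Fin.ext (by omega)
    have := π.injective this
    rw [Fin.ext_iff] at this
    exact Fin.ext (by simpa using this)
  have hwb : ∀ i : Fin b, ((π ⟨a + 1 + i, by omega⟩ : Fin n) : ℕ) < b := by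
    intro i
    exact hlt ⟨a + 1 + i, by omega⟩ (by simp; omega)
  have hinjb : Function.Injective (fun i : Fin b => (⟨(π ⟨a + 1 + i, by omega⟩ : ℕ), hwb i⟩ : Fin b)) := by
    intro x y hxy
    simp only [Fin.mk.injEq] at hxy
    have : π ⟨a + 1 + x, by omega⟩ = π ⟨a + 1 + y, by omega⟩ := Fin.ext (by omega)
    have := π.injective this
    rw [Fin.ext_iff] at this
    exact Fin.ext (by simpa using this)
  let α : Equiv.Perm (Fin a) :=
    Equiv.ofBijective _ ((Finite.injective_iff_bijective).mp hinja)
  let β : Equiv.Perm (Fin b) :=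
    Equiv.ofBijective _ ((Finite.injective_iff_bijective).mp hinjb)
  refine ⟨α, β, ?_⟩
  apply Equiv.ext
  intro i
  apply Fin.ext
  by_cases hi : (i : ℕ) < a
  · rw [join_apply_lt h α β i hi]
    have : α ⟨i, hi⟩ = (⟨(π ⟨(i:ℕ), by omega⟩ : ℕ) - b, hwa ⟨i, hi⟩⟩ : Fin a) := rfl
    rw [this]
    have hgei := hge ⟨(i:ℕ), by omega⟩ (by simpa using hi)
    have : π ⟨(i:ℕ), by omega⟩ = π i := by congr 1
    simp only [this] at hgei ⊢
    omega
  · by_cases hi2 : (i : ℕ) = a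
    · rw [join_apply_eq h α β i hi2]
      have : i = (⟨a, by omega⟩ : Fin n) := Fin.ext hi2
      rw [this, hpos]
    · have hgt : a < (i : ℕ) := by omega
      rw [join_apply_gt h α β i hgt]
      have : β ⟨(i:ℕ) - (a+1), by omega⟩ =
          (⟨(π ⟨a + 1 + ((i:ℕ) - (a+1)), by omega⟩ : ℕ), hwb ⟨(i:ℕ) - (a+1), by omega⟩⟩ : Fin b) := rfl
      rw [this]
      have e3 : (⟨a + 1 + ((i:ℕ) - (a+1)), by omega⟩ : Fin n) = i :=
        Fin.ext (show a + 1 + ((i:ℕ) - (a+1)) = (i:ℕ) by omega)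
      show (π (⟨a + 1 + ((i:ℕ) - (a+1)), by omega⟩ : Fin n) : ℕ) = (π i : ℕ)
      rw [e3]

end Aux4

section Aux5
variable {a b n : ℕ}

lemma join_apply_left (h : a + 1 + b = n) (α : Equiv.Perm (Fin a)) (β : Equiv.Perm (Fin b))
    (t : Fin a) : ((join h α β) ⟨t, by omega⟩ : ℕ) = b + α t := by
  rw [join_apply_lt h α β ⟨t, by omega⟩ (by simpa using t.isLt)]

lemma join_apply_right (h : a + 1 + b = n) (α : Equiv.Perm (Fin a)) (β : Equiv.Perm (Fin b))
    (t : Fin b) : ((join h α β) ⟨a + 1 + t, by omega⟩ : ℕ) = β t := by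
  rw [join_apply_gt h α β ⟨a + 1 + t, by omega⟩ (by simp; omega)]
  congr 1
  apply Fin.ext
  simp

lemma join_inj (h : a + 1 + b = n) {α α' : Equiv.Perm (Fin a)} {β β' : Equiv.Perm (Fin b)}
    (hj : join h α β = join h α' β') : α = α' ∧ β = β' := by
  constructor
  · apply Equiv.ext; intro t
    have h1 := join_apply_left h α β t
    have h2 := join_apply_left h α' β' t
    rw [hj] at h1
    apply Fin.ext
    omega
  · apply Equiv.ext; intro t
    have h1 := join_apply_right h α β t
    have h2 := join_apply_right h α' β' t
    rw [hj] at h1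
    apply Fin.ext
    omega

lemma nat_card_fiber {S ι : Type*} [Finite S] [Fintype ι] (F : S → ι) :
    Nat.card S = ∑ i : ι, Nat.card {s : S // F s = i} := by
  classical
  cases nonempty_fintype S
  simp only [Nat.card_eq_fintype_card]
  rw [← Fintype.card_sigma]
  exact Fintype.card_congr (Equiv.sigmaFiberEquiv F).symm

lemma card_fiber_eq (m N : ℕ) (sw adj : Bool) (h : a + 1 + b = N + 1) :
    Nat.card {π : Equiv.Perm (Fin (N+1)) //
        (pat132.Avoids π ∧ (genPat (m+1) sw adj).Avoids π) ∧
          π ⟨a, by omega⟩ = ⟨N, by omega⟩}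
    = Nat.card {α : Equiv.Perm (Fin a) // pat132.Avoids α ∧ (genPat m sw adj).Avoids α}
      * Nat.card {β : Equiv.Perm (Fin b) // pat132.Avoids β ∧ (genPat (m+1) sw adj).Avoids β} := by
  rw [← Nat.card_prod]
  apply Nat.card_congr
  apply Equiv.symm
  apply Equiv.ofBijective (f := fun x :
      ({α : Equiv.Perm (Fin a) // pat132.Avoids α ∧ (genPat m sw adj).Avoids α}
        × {β : Equiv.Perm (Fin b) // pat132.Avoids β ∧ (genPat (m+1) sw adj).Avoids β}) =>
    (⟨join h x.1.1 x.2.1,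
      ⟨⟨(avoids132_join h x.1.1 x.2.1).mpr ⟨x.1.2.1, x.2.2.1⟩,
        (avoids_gen_join h x.1.1 x.2.1).mpr ⟨x.1.2.2, x.2.2.2⟩⟩,
        by
          apply Fin.ext
          rw [join_apply_eq h x.1.1 x.2.1 ⟨a, by omega⟩ rfl]
          rfl⟩⟩ :
      {π : Equiv.Perm (Fin (N+1)) //
        (pat132.Avoids π ∧ (genPat (m+1) sw adj).Avoids π) ∧
          π ⟨a, by omega⟩ = ⟨N, by omega⟩}))
  constructor
  · intro x y hxy
    have hj : join h x.1.1 x.2.1 = join h y.1.1 y.2.1 := congrArg Subtype.val hxy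
    obtain ⟨e1, e2⟩ := join_inj h hj
    exact Prod.ext (Subtype.ext e1) (Subtype.ext e2)
  · rintro ⟨π, ⟨⟨h132, hq⟩, hpos⟩⟩
    obtain ⟨α, β, rfl⟩ := exists_join h π h132 hpos
    obtain ⟨ha132, hb132⟩ := (avoids132_join h α β).mp h132
    obtain ⟨haq, hbq⟩ := (avoids_gen_join h α β).mp hq
    exact ⟨⟨⟨α, ha132, haq⟩, ⟨β, hb132, hbq⟩⟩, rfl⟩

lemma card_rec (m N : ℕ) (sw adj : Bool) :
    Nat.card {π : Equiv.Perm (Fin (N+1)) //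
        pat132.Avoids π ∧ (genPat (m+1) sw adj).Avoids π}
    = ∑ i : Fin (N+1),
        Nat.card {α : Equiv.Perm (Fin (i:ℕ)) //
          pat132.Avoids α ∧ (genPat m sw adj).Avoids α}
        * Nat.card {β : Equiv.Perm (Fin (N - (i:ℕ))) //
          pat132.Avoids β ∧ (genPat (m+1) sw adj).Avoids β} := by
  classical
  rw [nat_card_fiber (fun x : {π : Equiv.Perm (Fin (N+1)) //
      pat132.Avoids π ∧ (genPat (m+1) sw adj).Avoids π} =>
    x.1.symm ⟨N, by omega⟩)]
  apply Finset.sum_congr rfl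
  intro i _
  have h : (i : ℕ) + 1 + (N - (i : ℕ)) = N + 1 := by have := i.isLt; omega
  rw [← card_fiber_eq m N sw adj h]
  apply Nat.card_congr
  refine (Equiv.subtypeSubtypeEquivSubtypeInter
    (fun π : Equiv.Perm (Fin (N+1)) => pat132.Avoids π ∧ (genPat (m+1) sw adj).Avoids π)
    (fun π : Equiv.Perm (Fin (N+1)) => π.symm ⟨N, by omega⟩ = i)).trans
    (Equiv.subtypeEquivRight ?_)
  intro π
  constructor
  · rintro ⟨hP, hfib⟩
    refine ⟨hP, ?_⟩
    have : π i = ⟨N, by omega⟩ := by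
      rw [← hfib]
      exact (π.apply_symm_apply _)
    rw [← this]
  · rintro ⟨hP, hfib⟩
    refine ⟨hP, ?_⟩
    have e : π i = ⟨N, by omega⟩ := by
      rw [← hfib]
    rw [← e]
    exact (π.symm_apply_apply _)

end Aux5

section Aux6
variable {n : ℕ}

-- avoidance of the length-2 pattern forces adjacent descents (sw = false) / ascents (sw = true)
lemma adj_descent_of_avoids {adj : Bool} (π : Equiv.Perm (Fin n))
    (hav : (genPat 0 false adj).Avoids π) (i : ℕ) (hi : i + 1 < n) :
    π ⟨i + 1, hi⟩ < π ⟨i, by omega⟩ := by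
  rcases lt_trichotomy (π ⟨i + 1, hi⟩) (π ⟨i, by omega⟩) with hlt | heq | hgt
  · exact hlt
  · exact absurd (π.injective heq) (by intro hc; rw [Fin.ext_iff] at hc; simp at hc)
  · exfalso
    apply hav
    refine ⟨![⟨i, by omega⟩, ⟨i + 1, hi⟩], ?_, ?_, ?_⟩
    · intro x y hxy
      fin_cases x <;> fin_cases y
      · exact absurd hxy (by decide)
      · exact Fin.lt_def.mpr (by simp)
      · exact absurd hxy (by decide)
      · exact absurd hxy (by decide)
    · intro x y
      rw [show (genPat 0 false adj).perm = patPerm 0 false from rfl, patPerm_lt]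
      fin_cases x <;> fin_cases y
      · exact iff_of_false (lt_irrefl _) (by decide)
      · exact iff_of_true hgt (by decide)
      · exact iff_of_false (lt_asymm hgt) (by decide)
      · exact iff_of_false (lt_irrefl _) (by decide)
    · intro j hj hjk
      have := genPat_adj_sub hj
      subst this
      rfl
  
lemma adj_ascent_of_avoids {adj : Bool} (π : Equiv.Perm (Fin n))
    (hav : (genPat 0 true adj).Avoids π) (i : ℕ) (hi : i + 1 < n) :
    π ⟨i, by omega⟩ < π ⟨i + 1, hi⟩ := by
  rcases lt_trichotomy (π ⟨i, by omega⟩) (π ⟨i + 1, hi⟩) with hlt | heq | hgt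
  · exact hlt
  · exact absurd (π.injective heq) (by intro hc; rw [Fin.ext_iff] at hc; simp at hc)
  · exfalso
    apply hav
    refine ⟨![⟨i, by omega⟩, ⟨i + 1, hi⟩], ?_, ?_, ?_⟩
    · intro x y hxy
      fin_cases x <;> fin_cases y
      · exact absurd hxy (by decide)
      · exact Fin.lt_def.mpr (by simp)
      · exact absurd hxy (by decide)
      · exact absurd hxy (by decide)
    · intro x y
      rw [show (genPat 0 true adj).perm = patPerm 0 true from rfl, patPerm_lt]
      fin_cases x <;> fin_cases y
      · exact iff_of_false (lt_irrefl _) (by decide)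
      · exact iff_of_false (lt_asymm hgt) (by decide)
      · exact iff_of_true hgt (by decide)
      · exact iff_of_false (lt_irrefl _) (by decide)
    · intro j hj hjk
      have := genPat_adj_sub hj
      subst this
      rfl

-- adjacent descents imply strict antitonicity
lemma strictAnti_of_adj_descent (π : Equiv.Perm (Fin n))
    (h : ∀ (i : ℕ) (hi : i + 1 < n), π ⟨i + 1, hi⟩ < π ⟨i, by omega⟩) :
    StrictAnti π := by
  have key : ∀ (d i : ℕ) (hd : i + d + 1 < n), π ⟨i + d + 1, hd⟩ < π ⟨i, by omega⟩ := by
    intro d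
    induction d with
    | zero => intro i hd; exact h i hd
    | succ d ih =>
      intro i hd
      have h1 : π ⟨i + d + 1 + 1, by omega⟩ < π ⟨i + d + 1, by omega⟩ := h (i + d + 1) (by omega)
      have h2 := ih i (by omega)
      have e : (⟨i + (d + 1) + 1, hd⟩ : Fin n) = ⟨i + d + 1 + 1, by omega⟩ :=
        Fin.ext (show i + (d + 1) + 1 = i + d + 1 + 1 by omega)
      rw [e]
      exact h1.trans h2
  intro x y hxy
  have hx : (x : ℕ) + ((y : ℕ) - (x : ℕ) - 1) + 1 < n := by
    have := y.isLt; have := Fin.lt_def.mp hxy; omega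
  have e1 : y = ⟨(x : ℕ) + ((y : ℕ) - (x : ℕ) - 1) + 1, hx⟩ := by
    apply Fin.ext; have := Fin.lt_def.mp hxy
    show (y : ℕ) = (x : ℕ) + ((y : ℕ) - (x : ℕ) - 1) + 1
    omega
  rw [e1]
  exact key _ _ hx

lemma strictMono_of_adj_ascent (π : Equiv.Perm (Fin n))
    (h : ∀ (i : ℕ) (hi : i + 1 < n), π ⟨i, by omega⟩ < π ⟨i + 1, hi⟩) :
    StrictMono π := by
  have key : ∀ (d i : ℕ) (hd : i + d + 1 < n), π ⟨i, by omega⟩ < π ⟨i + d + 1, hd⟩ := by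
    intro d
    induction d with
    | zero => intro i hd; exact h i hd
    | succ d ih =>
      intro i hd
      have h1 : π ⟨i + d + 1, by omega⟩ < π ⟨i + d + 1 + 1, by omega⟩ := h (i + d + 1) (by omega)
      have h2 := ih i (by omega)
      have e : (⟨i + (d + 1) + 1, hd⟩ : Fin n) = ⟨i + d + 1 + 1, by omega⟩ :=
        Fin.ext (show i + (d + 1) + 1 = i + d + 1 + 1 by omega)
      rw [e]
      exact h2.trans h1
  intro x y hxy
  have hx : (x : ℕ) + ((y : ℕ) - (x : ℕ) - 1) + 1 < n := by
    have := y.isLt; have := Fin.lt_def.mp hxy; omega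
  have e1 : y = ⟨(x : ℕ) + ((y : ℕ) - (x : ℕ) - 1) + 1, hx⟩ := by
    apply Fin.ext; have := Fin.lt_def.mp hxy
    show (y : ℕ) = (x : ℕ) + ((y : ℕ) - (x : ℕ) - 1) + 1
    omega
  rw [e1]
  exact key _ _ hx

lemma strictAnti_perm_unique {π₁ π₂ : Equiv.Perm (Fin n)}
    (h1 : StrictAnti π₁) (h2 : StrictAnti π₂) : π₁ = π₂ := by
  have m1 : StrictMono (fun i => π₁ (Fin.rev i)) := fun x y hxy => h1 (Fin.rev_lt_rev.mpr hxy)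
  have m2 : StrictMono (fun i => π₂ (Fin.rev i)) := fun x y hxy => h2 (Fin.rev_lt_rev.mpr hxy)
  have s1 : Set.range (fun i => π₁ (Fin.rev i)) = Set.univ :=
    Set.range_eq_univ.mpr (fun v => ⟨Fin.rev (π₁.symm v), by simp⟩)
  have s2 : Set.range (fun i => π₂ (Fin.rev i)) = Set.univ :=
    Set.range_eq_univ.mpr (fun v => ⟨Fin.rev (π₂.symm v), by simp⟩)
  have hr : Set.range (fun i => π₁ (Fin.rev i)) = Set.range (fun i => π₂ (Fin.rev i)) := by
    rw [s1, s2]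
  haveI : WellFoundedLT (Fin n) := inferInstance
  have := (m1.range_inj m2).mp hr
  apply Equiv.ext
  intro i
  have := congrFun this (Fin.rev i)
  simpa using this

lemma strictMono_perm_unique {π₁ π₂ : Equiv.Perm (Fin n)}
    (h1 : StrictMono π₁) (h2 : StrictMono π₂) : π₁ = π₂ := by
  have hr : Set.range π₁ = Set.range π₂ := by
    rw [Set.range_eq_univ.mpr π₁.surjective, Set.range_eq_univ.mpr π₂.surjective]
  haveI : WellFoundedLT (Fin n) := inferInstance
  have := (h1.range_inj h2).mp hr
  exact Equiv.ext (congrFun this)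

-- monotone permutations avoid the relevant patterns
lemma strictAnti_avoids_132 (π : Equiv.Perm (Fin n)) (h : StrictAnti π) :
    pat132.Avoids π := by
  rintro ⟨f, hm, hiso, -⟩
  have h01 : π (f 0) < π (f 1) := (hiso 0 1).mpr (by rw [pat132_lt 0 1]; decide)
  exact absurd (h (hm (show (0:Fin 3) < 1 by decide))) (lt_asymm h01)

lemma strictMono_avoids_132 (π : Equiv.Perm (Fin n)) (h : StrictMono π) :
    pat132.Avoids π := by
  rintro ⟨f, hm, hiso, -⟩
  have h21 : π (f 2) < π (f 1) := (hiso 2 1).mpr (by rw [pat132_lt 2 1]; decide)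
  exact absurd (h (hm (show (1:Fin 3) < 2 by decide))) (lt_asymm h21)

lemma strictAnti_avoids_gen {adj : Bool} (π : Equiv.Perm (Fin n)) (h : StrictAnti π) :
    (genPat 0 false adj).Avoids π := by
  rintro ⟨f, hm, hiso, -⟩
  have h01 : π (f 0) < π (f 1) := (hiso 0 1).mpr (by
    rw [show (genPat 0 false adj).perm = patPerm 0 false from rfl, patPerm_lt]; decide)
  exact absurd (h (hm (show (0:Fin 2) < 1 by decide))) (lt_asymm h01)

lemma strictMono_avoids_gen {adj : Bool} (π : Equiv.Perm (Fin n)) (h : StrictMono π) :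
    (genPat 0 true adj).Avoids π := by
  rintro ⟨f, hm, hiso, -⟩
  have h10 : π (f 1) < π (f 0) := (hiso 1 0).mpr (by
    rw [show (genPat 0 true adj).perm = patPerm 0 true from rfl, patPerm_lt]; decide)
  exact absurd (h (hm (show (0:Fin 2) < 1 by decide))) (lt_asymm h10)

lemma card_base (n : ℕ) (sw adj : Bool) :
    Nat.card {π : Equiv.Perm (Fin n) //
      pat132.Avoids π ∧ (genPat 0 sw adj).Avoids π} = 1 := by
  rw [Nat.card_eq_one_iff_unique]
  cases sw with
  | false =>
    constructor
    · constructor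
      intro x y
      apply Subtype.ext
      apply strictAnti_perm_unique
      · exact strictAnti_of_adj_descent _ (fun i hi => adj_descent_of_avoids _ x.2.2 i hi)
      · exact strictAnti_of_adj_descent _ (fun i hi => adj_descent_of_avoids _ y.2.2 i hi)
    · refine ⟨⟨Fin.revPerm, ?_, ?_⟩⟩
      · exact strictAnti_avoids_132 _ (fun x y hxy => by
          simpa using Fin.rev_lt_rev.mpr hxy)
      · exact strictAnti_avoids_gen _ (fun x y hxy => by
          simpa using Fin.rev_lt_rev.mpr hxy)
  | true =>
    constructor
    · constructor
      intro x y
      apply Subtype.ext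
      apply strictMono_perm_unique
      · exact strictMono_of_adj_ascent _ (fun i hi => adj_ascent_of_avoids _ x.2.2 i hi)
      · exact strictMono_of_adj_ascent _ (fun i hi => adj_ascent_of_avoids _ y.2.2 i hi)
    · refine ⟨⟨1, ?_, ?_⟩⟩
      · exact strictMono_avoids_132 _ (fun x y hxy => by simpa using hxy)
      · exact strictMono_avoids_gen _ (fun x y hxy => by simpa using hxy)

lemma card_nil (m : ℕ) (sw adj : Bool) :
    Nat.card {π : Equiv.Perm (Fin 0) //
      pat132.Avoids π ∧ (genPat m sw adj).Avoids π} = 1 := by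
  rw [Nat.card_eq_one_iff_unique]
  constructor
  · constructor
    intro x y
    apply Subtype.ext
    apply Equiv.ext
    intro i
    exact i.elim0
  · refine ⟨⟨1, ?_, ?_⟩⟩
    · rintro ⟨f, -⟩; exact (f ⟨0, by omega⟩).elim0
    · rintro ⟨f, -⟩; exact (f ⟨0, by omega⟩).elim0

end Aux6

section Aux7

lemma Fgen_base (sw adj : Bool) :
    Fgen (genPat 0 sw adj) = PowerSeries.mk (fun _ => (1 : ℚ)) := by
  apply PowerSeries.ext; intro n
  simp [Fgen, card_base n sw adj]

lemma one_sub_X_mul_ones :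
    (1 - PowerSeries.X : PowerSeries ℚ) * PowerSeries.mk (fun _ => (1 : ℚ)) = 1 := by
  ext n
  rw [sub_mul, one_mul, map_sub]
  cases n with
  | zero => simp
  | succ n => simp [PowerSeries.coeff_succ_X_mul]

lemma Fgen_rec (m : ℕ) (sw adj : Bool) :
    Fgen (genPat (m+1) sw adj)
      = 1 + PowerSeries.X * (Fgen (genPat m sw adj) * Fgen (genPat (m+1) sw adj)) := by
  apply PowerSeries.ext; intro n
  rw [map_add]
  cases n with
  | zero =>
    rw [PowerSeries.coeff_zero_X_mul]
    simp [Fgen, card_nil]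
  | succ n =>
    rw [PowerSeries.coeff_succ_X_mul, PowerSeries.coeff_mul]
    have hc : (PowerSeries.coeff (R := ℚ) (n+1)) (1 : PowerSeries ℚ) = 0 := by simp
    rw [hc, zero_add]
    simp only [Fgen, PowerSeries.coeff_mk]
    rw [card_rec m n sw adj]
    rw [Finset.Nat.sum_antidiagonal_eq_sum_range_succ_mk]
    rw [← Fin.sum_univ_eq_sum_range (fun k =>
      (Nat.card {α : Equiv.Perm (Fin k) //
          pat132.Avoids α ∧ (genPat m sw adj).Avoids α} : ℚ)
        * (Nat.card {β : Equiv.Perm (Fin (n - k)) //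
          pat132.Avoids β ∧ (genPat (m+1) sw adj).Avoids β} : ℚ)) (n+1)]
    push_cast
    rfl

lemma main_chebyshev (m : ℕ) (sw adj : Bool) :
    V (m+2) * Fgen (genPat m sw adj) = V (m+1) := by
  induction m with
  | zero =>
    have hV : V 2 = 1 - PowerSeries.X := by
      show V 1 - PowerSeries.X * V 0 = _
      show (1 : PowerSeries ℚ) - PowerSeries.X * 1 = _
      ring
    rw [Fgen_base, hV, one_sub_X_mul_ones]
    rfl
  | succ m ih =>
    have hrec := Fgen_rec m sw adj
    have hV : V (m+3) = V (m+2) - PowerSeries.X * V (m+1) := rfl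
    show V (m+3) * Fgen (genPat (m+1) sw adj) = V (m+2)
    rw [hV]
    linear_combination V (m+2) * hrec + PowerSeries.X * Fgen (genPat (m+1) sw adj) * ih

end Aux7


/-- For `τ ∈ {12, 1-2, 21, 2-1}` and `k ≥ 2`,
`F_{τ-3-4-⋯-k}(x) = R_k(x) = V_{k−1}(x)/V_k(x)`, i.e.
`V_k(x)·F_{τ-3-4-⋯-k}(x) = V_{k−1}(x)`. -/
theorem statement1 (k : ℕ) (hk : 2 ≤ k) (σ : Equiv.Perm (Fin k)) (A : Set ℕ)
    (hσ : σ = 1 ∨ σ = Equiv.swap (⟨0, by omega⟩ : Fin k) (⟨1, by omega⟩ : Fin k))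
    (hA : A = (∅ : Set ℕ) ∨ A = ({0} : Set ℕ)) :
    V k * Fgen (⟨σ, A⟩ : GenPattern k) = V (k - 1) := by
  obtain ⟨m, rfl⟩ : ∃ m, k = m + 2 := ⟨k - 2, by omega⟩
  rcases hσ with h1 | h1 <;> rcases hA with h2 | h2
  · have e : (⟨σ, A⟩ : GenPattern (m+2)) = genPat m false false := by
      rw [h1, h2]; rfl
    rw [e]; exact main_chebyshev m false false
  · have e : (⟨σ, A⟩ : GenPattern (m+2)) = genPat m false true := by
      rw [h1, h2]; rfl
    rw [e]; exact main_chebyshev m false true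
  · have e : (⟨σ, A⟩ : GenPattern (m+2)) = genPat m true false := by
      rw [h1, h2]; rfl
    rw [e]; exact main_chebyshev m true false
  · have e : (⟨σ, A⟩ : GenPattern (m+2)) = genPat m true true := by
      rw [h1, h2]; rfl
    rw [e]; exact main_chebyshev m true true
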